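/- Let L be a complete modular lattice and let P, Q be finite subsets of L consisting of strongly irreducible elements such that ⨅ P = ⊥ = ⨅ Q and both representations are irredundant, i.e., for every proper subset P' ⊊ P one has ⨅ P' ≠ ⊥, and likewise for Q. Then P and Q have the same cardinality and in fact P = Q. -/

import Mathlib

/-- An element `p` of a lattice is *strongly irreducible* if
`a ⊓ b ≤ p` implies `a ≤ p` or `b ≤ p` for all `a b`. -/
def StronglyIrreducible {α : Type*} [SemilatticeInf α] (p : α) : Prop :=
  ∀ a b : α, a ⊓ b ≤ p → a ≤ p ∨ b ≤ p

private lemma inf_le_prime {α : Type*} [CompleteLattice α] {p : α}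
    (hp : StronglyIrreducible p) :
    ∀ (Q : Finset α), Q.inf id ≤ p → (∃ q ∈ Q, q ≤ p) ∨ p = ⊤ := by
  classical
  intro Q
  induction Q using Finset.induction_on with
  | empty => intro h; right; simpa using h
  | insert a s ha ih =>
    intro h
    rw [Finset.inf_insert] at h
    rcases hp _ _ h with h1 | h2
    · exact Or.inl ⟨a, Finset.mem_insert_self a s, h1⟩
    · rcases ih h2 with ⟨q, hq, hqp⟩ | ht
      · exact Or.inl ⟨q, Finset.mem_insert_of_mem hq, hqp⟩
      · exact Or.inr ht

private lemma subset_of_reps {α : Type*} [CompleteLattice α]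
    (P Q : Finset α)
    (hP : ∀ p ∈ P, StronglyIrreducible p) (hQ : ∀ q ∈ Q, StronglyIrreducible q)
    (hPinf : P.inf id = ⊥) (hQinf : Q.inf id = ⊥)
    (hPirr : ∀ P' : Finset α, P' ⊂ P → P'.inf id ≠ ⊥) :
    P ⊆ Q := by
  classical
  intro p hpP
  -- inf over erase p
  have hins : P = insert p (P.erase p) := (Finset.insert_erase hpP).symm
  have hinfP : p ⊓ (P.erase p).inf id = ⊥ := by
    have := Finset.inf_insert (b := p) (s := P.erase p) (f := (id : α → α))
    rw [← hins] at this
    simp only [id] at this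
    rw [← this]; exact hPinf
  have hne : (P.erase p).inf id ≠ ⊥ := hPirr _ (Finset.erase_ssubset hpP)
  have hpnetop : p ≠ ⊤ := by
    intro h; apply hne
    rw [← hinfP, h, top_inf_eq]
  -- get q ∈ Q with q ≤ p
  have hQle : Q.inf id ≤ p := by rw [hQinf]; exact bot_le
  rcases inf_le_prime (hP p hpP) Q hQle with ⟨q, hqQ, hqp⟩ | ht
  · -- get p' ∈ P with p' ≤ q
    have hPle : P.inf id ≤ q := by rw [hPinf]; exact bot_le
    have hqnetop : q ≠ ⊤ := fun h => hpnetop (top_le_iff.mp (h ▸ hqp))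
    rcases inf_le_prime (hQ q hqQ) P hPle with ⟨p', hp'P, hp'q⟩ | ht'
    · have hp'p : p' ≤ p := hp'q.trans hqp
      have : p' = p := by
        by_contra hne'
        apply hne
        have hmem : p' ∈ P.erase p := Finset.mem_erase.mpr ⟨hne', hp'P⟩
        have h1 : (P.erase p).inf id ≤ p := (Finset.inf_le hmem).trans hp'p
        rw [← hinfP, inf_eq_right.mpr h1]
      have hpq : p = q := le_antisymm (this ▸ hp'q) hqp
      rwa [hpq]
    · exact absurd ht' hqnetop
  · exact absurd ht hpnetop

/-- Two finite irredundant ∧-representations of `⊥` by strongly irreducible elements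
in a complete modular lattice coincide (in particular they have the same cardinality). -/
theorem strong_KurosOre
    {α : Type*} [CompleteLattice α] [IsModularLattice α]
    (P Q : Finset α)
    (hP : ∀ p ∈ P, StronglyIrreducible p) (hQ : ∀ q ∈ Q, StronglyIrreducible q)
    (hPinf : P.inf id = ⊥) (hQinf : Q.inf id = ⊥)
    (hPirr : ∀ P' : Finset α, P' ⊂ P → P'.inf id ≠ ⊥)
    (hQirr : ∀ Q' : Finset α, Q' ⊂ Q → Q'.inf id ≠ ⊥) :
    P.card = Q.card ∧ P = Q := by
  have h1 := subset_of_reps P Q hP hQ hPinf hQinf hPirr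
  have h2 := subset_of_reps Q P hQ hP hQinf hPinf hQirr
  have hPQ : P = Q := Finset.Subset.antisymm h1 h2
  exact ⟨by rw [hPQ], hPQ⟩
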